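/- There exists a positive integer N₀ such that for every integer n ≥ N₀ whose binary representation has exactly k digits of which at most 0.54·k are ones, the following holds: if a is a positive integer with 1 ≤ a ≤ n/2 and f(n) = f(a) + f(n − a), then a ≤ 2·n^{0.342}. -/

import Mathlib

/-- `CanRepr n k` means the positive integer `n` can be built from exactly `k` ones
using additions and multiplications. -/
inductive CanRepr : ℕ → ℕ → Prop
  | one : CanRepr 1 1
  | add : ∀ {a b j k : ℕ}, CanRepr a j → CanRepr b k → CanRepr (a + b) (j + k)
  | mul : ∀ {a b j k : ℕ}, CanRepr a j → CanRepr b k → CanRepr (a * b) (j + k)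

/-- The integer complexity `f(n)`: the least number of 1's needed to express `n`
using 1's, `+`, `*`, and parentheses. -/
noncomputable def complexity (n : ℕ) : ℕ := sInf {k | CanRepr n k}

lemma canRepr_pos {n k : ℕ} (h : CanRepr n k) : 1 ≤ n ∧ 1 ≤ k := by
  induction h with
  | one => exact ⟨le_refl 1, le_refl 1⟩
  | add ha hb ih1 ih2 => omega
  | mul ha hb ih1 ih2 =>
      exact ⟨le_trans (by norm_num) (Nat.mul_le_mul ih1.1 ih2.1), by omega⟩

lemma canRepr_small {n k : ℕ} (h : CanRepr n k) : k ≤ 2 → n ≤ k := by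
  induction h with
  | one => intro _; exact le_refl 1
  | add ha hb ih1 ih2 =>
      intro h2
      have p1 := canRepr_pos ha; have p2 := canRepr_pos hb
      have q1 := ih1 (by omega); have q2 := ih2 (by omega)
      omega
  | mul ha hb ih1 ih2 =>
      rename_i x y j k
      intro h2
      have p1 := canRepr_pos ha; have p2 := canRepr_pos hb
      have q1 := ih1 (by omega); have q2 := ih2 (by omega)
      have hx : x ≤ 1 := by omega
      have hy : y ≤ 1 := by omega
      have := Nat.mul_le_mul hx hy
      omega

lemma cube_le (m : ℕ) (c : ℝ) (hc : 0 ≤ c) (h : c^3 ≤ 3^m) : c ≤ (3:ℝ) ^ ((m:ℝ)/3) := by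
  have h3 : ((3:ℝ) ^ ((m:ℝ)/3)) ^ (3:ℕ) = 3 ^ m := by
    rw [← Real.rpow_natCast ((3:ℝ) ^ ((m:ℝ)/3)) 3, ← Real.rpow_mul (by norm_num)]
    norm_num
  have hb : (0:ℝ) ≤ (3:ℝ) ^ ((m:ℝ)/3) := le_of_lt (Real.rpow_pos_of_pos (by norm_num) _)
  exact (pow_le_pow_iff_left₀ hc hb (by norm_num : (3:ℕ) ≠ 0)).mp (by rw [h3]; exact h)

lemma key1 (s : ℕ) (h1 : 2 ≤ s) (h2 : s ≤ 4) : (s:ℝ) ≤ (3:ℝ)^((s:ℝ)/3) := by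
  apply cube_le s s (by positivity)
  interval_cases s <;> norm_num

lemma key2 (j : ℕ) (h1 : 1 ≤ j) (h2 : j ≤ 2) : 1 + (j:ℝ)/3 ≤ (3:ℝ)^((j:ℝ)/3) := by
  apply cube_le j _ (by positivity)
  interval_cases j <;> norm_num

lemma key3 (k : ℕ) (h : 3 ≤ k) : (3:ℝ) ≤ (3:ℝ)^((k:ℝ)/3) := by
  calc (3:ℝ) = (3:ℝ)^(1:ℝ) := (Real.rpow_one 3).symm
    _ ≤ _ := by
      apply Real.rpow_le_rpow_of_exponent_le (by norm_num)
      rw [le_div_iff₀ (by norm_num)]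
      exact_mod_cast (by exact_mod_cast h : (3:ℝ) ≤ k)

lemma canRepr_le_rpow {n k : ℕ} (h : CanRepr n k) : (n:ℝ) ≤ (3:ℝ) ^ ((k:ℝ)/3) := by
  induction h with
  | one => exact_mod_cast cube_le 1 1 (by norm_num) (by norm_num)
  | add ha hb ih1 ih2 =>
      rename_i x y j k
      have p1 := canRepr_pos ha; have p2 := canRepr_pos hb
      have hsplit : (3:ℝ) ^ (((j+k:ℕ):ℝ)/3) = (3:ℝ)^((j:ℝ)/3) * (3:ℝ)^((k:ℝ)/3) := by
        rw [← Real.rpow_add (by norm_num)]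
        push_cast; ring_nf
      have hxy : ((x + y : ℕ):ℝ) = (x:ℝ) + y := by push_cast; ring
      have hSpos : (0:ℝ) < (3:ℝ)^((j:ℝ)/3) := Real.rpow_pos_of_pos (by norm_num) _
      have hTpos : (0:ℝ) < (3:ℝ)^((k:ℝ)/3) := Real.rpow_pos_of_pos (by norm_num) _
      rcases le_or_gt j 2 with hj | hj <;> rcases le_or_gt k 2 with hk | hk
      · have q1 := canRepr_small ha hj
        have q2 := canRepr_small hb hk
        refine le_trans ?_ (key1 (j+k) (by omega) (by omega))
        exact_mod_cast Nat.cast_le.mpr (by omega : x + y ≤ j + k)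
      · -- j small, k large
        have q1 := canRepr_small ha hj
        have hT := key3 k (by omega)
        have hK := key2 j p1.2 hj
        have hxR : (x:ℝ) ≤ j := by exact_mod_cast q1
        rw [hxy, hsplit]
        nlinarith [mul_le_mul_of_nonneg_right hK (le_of_lt hTpos),
          mul_le_mul_of_nonneg_left hT (by positivity : (0:ℝ) ≤ (j:ℝ)/3)]
      · -- k small, j large
        have q2 := canRepr_small hb hk
        have hS := key3 j (by omega)
        have hK := key2 k p2.2 hk
        have hyR : (y:ℝ) ≤ k := by exact_mod_cast q2
        rw [hxy, hsplit]
        nlinarith [mul_le_mul_of_nonneg_left hK (le_of_lt hSpos),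
          mul_le_mul_of_nonneg_right hS (by positivity : (0:ℝ) ≤ (k:ℝ)/3)]
      · have hS := key3 j (by omega)
        have hT := key3 k (by omega)
        rw [hxy, hsplit]
        nlinarith [mul_le_mul (by linarith : (2:ℝ) ≤ (3:ℝ)^((j:ℝ)/3) - 1)
          (by linarith : (2:ℝ) ≤ (3:ℝ)^((k:ℝ)/3) - 1) (by norm_num) (by linarith)]
  | mul ha hb ih1 ih2 =>
      rename_i x y j k
      have hsplit : (3:ℝ) ^ (((j+k:ℕ):ℝ)/3) = (3:ℝ)^((j:ℝ)/3) * (3:ℝ)^((k:ℝ)/3) := by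
        rw [← Real.rpow_add (by norm_num)]
        push_cast; ring_nf
      have hxy : ((x * y : ℕ):ℝ) = (x:ℝ) * y := by push_cast; ring
      rw [hxy, hsplit]
      exact mul_le_mul ih1 ih2 (by positivity) (by positivity)

lemma canRepr_binary : ∀ n : ℕ, 1 ≤ n →
    ∃ k, CanRepr n k ∧ k ≤ 2 * (Nat.digits 2 n).length + (Nat.digits 2 n).count 1 := by
  intro n
  induction n using Nat.strong_induction_on with
  | _ n ih =>
  intro h1
  rcases eq_or_lt_of_le h1 with h | h
  · refine ⟨1, by rw [← h]; exact .one, ?_⟩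
    rw [← h]
    norm_num
  · have hd : Nat.digits 2 n = n % 2 :: Nat.digits 2 (n / 2) :=
      Nat.digits_def' (by norm_num) (by omega)
    obtain ⟨k, hk, hkb⟩ := ih (n / 2) (by omega) (by omega)
    have h2 : CanRepr 2 2 := CanRepr.add .one .one
    rcases Nat.even_or_odd n with he | ho
    · have hm : n % 2 = 0 := Nat.even_iff.mp he
      refine ⟨2 + k, ?_, ?_⟩
      · have := CanRepr.mul h2 hk
        rwa [show 2 * (n / 2) = n by omega] at this
      · rw [hd, hm]
        simp only [List.length_cons, List.count_cons]
        norm_num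
        omega
    · have hm : n % 2 = 1 := Nat.odd_iff.mp ho
      refine ⟨2 + k + 1, ?_, ?_⟩
      · have := CanRepr.add (CanRepr.mul h2 hk) CanRepr.one
        rwa [show 2 * (n / 2) + 1 = n by omega] at this
      · rw [hd, hm]
        simp only [List.length_cons, List.count_cons]
        norm_num
        omega

lemma canRepr_complexity {n : ℕ} (h : 1 ≤ n) : CanRepr n (complexity n) := by
  obtain ⟨k, hk, -⟩ := canRepr_binary n h
  exact Nat.sInf_mem ⟨k, hk⟩

lemma complexity_le {n k : ℕ} (h : CanRepr n k) : complexity n ≤ k := Nat.sInf_le h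

set_option maxRecDepth 8000 in
theorem stmt_13 : ∃ N₀ : ℕ, 0 < N₀ ∧ ∀ n : ℕ, N₀ ≤ n →
    ((Nat.digits 2 n).count 1 : ℝ) ≤ 0.54 * ((Nat.digits 2 n).length : ℝ) →
    ∀ a : ℕ, 1 ≤ a → (a : ℝ) ≤ (n : ℝ) / 2 →
      complexity n = complexity a + complexity (n - a) →
      (a : ℝ) ≤ 2 * (n : ℝ) ^ ((0.342 : ℝ)) := by
  refine ⟨3^30000, pow_pos (by norm_num) _, ?_⟩
  intro n hn hones a ha1 ha2 heq
  have hn1 : 1 ≤ n := le_trans (Nat.one_le_pow _ _ (by norm_num)) hn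
  have hnR : (1:ℝ) ≤ (n:ℝ) := by exact_mod_cast hn1
  have h2a : 2 * a ≤ n := by
    have : ((2 * a : ℕ) : ℝ) ≤ (n:ℝ) := by push_cast; linarith
    exact_mod_cast this
  have hna1 : 1 ≤ n - a := by omega
  set A := complexity a with hAdef
  set B := complexity (n - a) with hBdef
  set F := complexity n with hFdef
  have hA := canRepr_complexity ha1
  have hB := canRepr_complexity hna1
  have haR : (a:ℝ) ≤ 3 ^ ((A:ℝ)/3) := canRepr_le_rpow hA
  have hbR : ((n - a : ℕ):ℝ) ≤ 3 ^ ((B:ℝ)/3) := canRepr_le_rpow hB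
  obtain ⟨k₀, hk₀, hk₀b⟩ := canRepr_binary n hn1
  have hF : F ≤ 2 * (Nat.digits 2 n).length + (Nat.digits 2 n).count 1 :=
    le_trans (complexity_le hk₀) hk₀b
  have hlen : (Nat.digits 2 n).length = Nat.log 2 n + 1 :=
    Nat.digits_len 2 n (by norm_num) (by omega)
  have hpow : 2 ^ (Nat.log 2 n) ≤ n := Nat.pow_log_le_self 2 (by omega)
  set l2 := Real.log 2 with hl2def
  set l3 := Real.log 3 with hl3def
  set ln := Real.log n with hlndef
  have hl2 : 0 < l2 := Real.log_pos (by norm_num)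
  have hl3 : 0 < l3 := Real.log_pos (by norm_num)
  have hkl : (Nat.log 2 n : ℝ) * l2 ≤ ln := by
    have h1 : ((2 ^ Nat.log 2 n : ℕ) : ℝ) ≤ (n:ℝ) := by exact_mod_cast hpow
    have h2 := Real.log_le_log (by positivity) h1
    rw [show ((2 ^ Nat.log 2 n : ℕ) : ℝ) = (2:ℝ) ^ (Nat.log 2 n) by push_cast; ring,
      Real.log_pow] at h2
    exact h2
  have h23 : 200 * l3 ≤ 317 * l2 := by
    have h : ((3:ℝ)) ^ (200:ℕ) ≤ (2:ℝ) ^ (317:ℕ) := by exact_mod_cast (by decide : (3:ℕ) ^ 200 ≤ 2 ^ 317)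
    have h2 := Real.log_le_log (by positivity) h
    rw [Real.log_pow, Real.log_pow] at h2
    push_cast at h2
    linarith
  have h32 : 3 * l2 ≤ 2 * l3 := by
    have h : ((2:ℝ)) ^ (3:ℕ) ≤ (3:ℝ) ^ (2:ℕ) := by norm_num
    have h2 := Real.log_le_log (by positivity) h
    rw [Real.log_pow, Real.log_pow] at h2
    push_cast at h2
    linarith
  have hln : 30000 * l3 ≤ ln := by
    have h1 : ((3 ^ 30000 : ℕ) : ℝ) ≤ (n:ℝ) := by exact_mod_cast hn
    have h2 := Real.log_le_log (by positivity) h1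
    rw [show ((3 ^ 30000 : ℕ) : ℝ) = (3:ℝ) ^ (30000:ℕ) by push_cast; ring,
      Real.log_pow] at h2
    push_cast at h2
    linarith
  clear hn
  -- F bound
  have hFle : (F:ℝ) ≤ 2.54 * ((Nat.log 2 n : ℝ) + 1) := by
    have h1 : (F:ℝ) ≤ 2 * ((Nat.digits 2 n).length : ℝ) + ((Nat.digits 2 n).count 1 : ℝ) := by
      exact_mod_cast hF
    have h2 : ((Nat.digits 2 n).length : ℝ) = (Nat.log 2 n : ℝ) + 1 := by
      rw [hlen]; push_cast; ring
    rw [h2] at h1 hones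
    linarith
  have hFl2 : (F:ℝ) * l2 ≤ 2.54 * (ln + l2) := by
    have h1 : (F:ℝ) * l2 ≤ 2.54 * ((Nat.log 2 n : ℝ) + 1) * l2 :=
      mul_le_mul_of_nonneg_right hFle (le_of_lt hl2)
    nlinarith [hkl, hl2]
  have hFl3 : 200 * ((F:ℝ) * l3) ≤ 317 * ((F:ℝ) * l2) := by
    have hFpos : (0:ℝ) ≤ (F:ℝ) := by positivity
    have := mul_le_mul_of_nonneg_left h23 hFpos
    nlinarith [this]
  -- log a
  have hapos : (0:ℝ) < (a:ℝ) := by exact_mod_cast ha1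
  have hla : Real.log a ≤ (A:ℝ)/3 * l3 := by
    have h2 := Real.log_le_log hapos haR
    rwa [Real.log_rpow (by norm_num)] at h2
  -- log (n-a)
  have hnan : ((n - a : ℕ):ℝ) = (n:ℝ) - (a:ℝ) := by
    push_cast [Nat.cast_sub (by omega : a ≤ n)]; ring
  have hlb : ln - l2 ≤ (B:ℝ)/3 * l3 := by
    have h1 : (n:ℝ)/2 ≤ 3 ^ ((B:ℝ)/3) := by
      rw [hnan] at hbR; linarith
    have h2 := Real.log_le_log (by linarith) h1
    rw [Real.log_rpow (by norm_num), Real.log_div (by linarith) (by norm_num)] at h2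
    exact h2
  have hAB : (A:ℝ) + (B:ℝ) = (F:ℝ) := by exact_mod_cast heq.symm
  have hAl3 : (A:ℝ) * l3 = (F:ℝ) * l3 - (B:ℝ) * l3 := by rw [← hAB]; ring
  have hgoal : Real.log a ≤ l2 + 0.342 * ln := by
    have hBl3 : 3 * (ln - l2) ≤ (B:ℝ) * l3 := by linarith
    linarith [hla, hAl3, hFl3, hFl2, hBl3, hln, h32, hl2, hl3]
  calc (a:ℝ) = Real.exp (Real.log a) := (Real.exp_log hapos).symm
    _ ≤ Real.exp (l2 + 0.342 * ln) := Real.exp_le_exp.2 hgoal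
    _ = 2 * (n:ℝ) ^ ((0.342:ℝ)) := by
        rw [Real.exp_add, hl2def, Real.exp_log (by norm_num : (0:ℝ) < 2),
          Real.rpow_def_of_pos (by linarith : (0:ℝ) < (n:ℝ)), hlndef]
        ring_nf
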